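/- For every MUL-tree (T, M, ψ) there exists a singly-labeled tree (T', M', ψ') whose label set M' contains M and such that every quartet in the information content I(T) also belongs to I(T'); in particular, the set of quartets I(T) is compatible (displayed by a single singly-labeled tree). -/

import Mathlib

open SimpleGraph

variable {V V' L L' : Type}

/-- Degree of a vertex, via `Set.ncard` of the neighbor set (no instances needed). -/
noncomputable def deg (G : SimpleGraph V) (v : V) : ℕ := (G.neighborSet v).ncard

/-- A leaf is a vertex of degree one. -/
def IsLeaf (G : SimpleGraph V) (v : V) : Prop := deg G v = 1

/-- The vertex set of the subtree `T_u^{uv}`: vertices reachable from `u`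
after deleting the edge `(u,v)`. -/
def side (G : SimpleGraph V) (u v : V) : Set V :=
  {w | (G.deleteEdges {s(u, v)}).Reachable w u}

/-- Labels appearing on leaves of the `u`-side of the edge `(u,v)`. -/
def sideLabels (G : SimpleGraph V) (ψ : V → L) (u v : V) : Set L :=
  {m | ∃ w, IsLeaf G w ∧ w ∈ side G u v ∧ ψ w = m}

/-- `M_u^{uv}`: labels appearing on leaves of `T_u^{uv}` but not of `T_v^{uv}`. -/
def Mside (G : SimpleGraph V) (ψ : V → L) (u v : V) : Set L :=
  sideLabels G ψ u v \ sideLabels G ψ v u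

/-- `C^{uv}`: labels appearing on leaves of both sides of the edge `(u,v)`. -/
def Cside (G : SimpleGraph V) (ψ : V → L) (u v : V) : Set L :=
  sideLabels G ψ u v ∩ sideLabels G ψ v u

/-- A quartet `ab|cd`: an unordered pair of unordered pairs of labels. -/
abbrev Quartet (L : Type) := Sym2 (Sym2 L)

/-- The edge `(u,v)` resolves the quartet `q = ab|cd` when `{a,b} ⊆ M_u^{uv}` and
`{c,d} ⊆ M_v^{uv}` (with `a,b,c,d` four distinct labels). -/
def Resolves (G : SimpleGraph V) (ψ : V → L) (u v : V) (q : Quartet L) : Prop :=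
  G.Adj u v ∧ ∃ a b c d : L, a ≠ b ∧ c ≠ d ∧
    a ∈ Mside G ψ u v ∧ b ∈ Mside G ψ u v ∧
    c ∈ Mside G ψ v u ∧ d ∈ Mside G ψ v u ∧
    q = s(s(a, b), s(c, d))

/-- `Δ(u,v)`: the set of quartets resolved by the edge `(u,v)`. -/
def Δ (G : SimpleGraph V) (ψ : V → L) (u v : V) : Set (Quartet L) :=
  {q | Resolves G ψ u v q}

/-- The information content `I(T)`: all quartets resolved by some edge. -/
def infoContent (G : SimpleGraph V) (ψ : V → L) : Set (Quartet L) :=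
  {q | ∃ u v, Resolves G ψ u v q}

/-- The label set `M`: labels carried by the leaves. -/
def labelSet (G : SimpleGraph V) (ψ : V → L) : Set L :=
  {m | ∃ v, IsLeaf G v ∧ ψ v = m}

/-- Singly labeled: the labeling map is injective on leaves. -/
def SinglyLabeled (G : SimpleGraph V) (ψ : V → L) : Prop :=
  ∀ v w, IsLeaf G v → IsLeaf G w → ψ v = ψ w → v = w

/-- A MUL-tree: a finite unrooted tree (encoded as the nontrivial connected component
of `G`; vertices outside `G.support` are unused isolated vertices) together with a
labeling `ψ` of its leaves, such that every internal (non-leaf) node has degree ≥ 3.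
The label set `M` is `labelSet G ψ`, onto which `ψ` (restricted to leaves) is
automatically surjective. -/
structure MulTree (V L : Type) : Type where
  G : SimpleGraph V
  ψ : V → L
  fin : Finite V
  acyclic : G.IsAcyclic
  conn : ∀ u ∈ G.support, ∀ v ∈ G.support, G.Reachable u v
  internal3 : ∀ v ∈ G.support, ¬ IsLeaf G v → 3 ≤ deg G v

/-- `y` lies on the (unique) path between `a` and `b`: `a,b` are connected and
every walk from `a` to `b` passes through `y`. -/
def OnPath (G : SimpleGraph V) (y a b : V) : Prop :=
  G.Reachable a b ∧ ∀ p : G.Walk a b, y ∈ p.support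

/-- The edges `(u,v)` and `(w,x)` lie, in this order, on the path
`P_{u,x} = (u, v, …, w, x)` (possibly `v = w`). -/
def PathConfig (G : SimpleGraph V) (u v w x : V) : Prop :=
  G.Adj u v ∧ G.Adj w x ∧ OnPath G v u x ∧ OnPath G w v x

/-- An internal edge: both endpoints are internal (non-leaf) nodes. -/
def InternalEdge (G : SimpleGraph V) (a b : V) : Prop :=
  G.Adj a b ∧ ¬ IsLeaf G a ∧ ¬ IsLeaf G b

/-- Contracting the edge `(a,b)`: identify `b` with `a` (the vertex `b` becomes
an unused isolated vertex). -/
def contractEdge (G : SimpleGraph V) (a b : V) : SimpleGraph V where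
  Adj x y := x ≠ y ∧ x ≠ b ∧ y ≠ b ∧
    (G.Adj x y ∨ (x = a ∧ G.Adj b y) ∨ (y = a ∧ G.Adj x b))
  symm := by
    refine ⟨?_⟩
    rintro x y ⟨h1, h2, h3, h4 | ⟨hx, hy⟩ | ⟨hy, hx⟩⟩
    · exact ⟨h1.symm, h3, h2, Or.inl h4.symm⟩
    · exact ⟨h1.symm, h3, h2, Or.inr (Or.inr ⟨hx, hy.symm⟩)⟩
    · exact ⟨h1.symm, h3, h2, Or.inr (Or.inl ⟨hy, hx.symm⟩)⟩
  loopless := ⟨fun x h => h.1 rfl⟩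

/-- `PruneSpec G v₀ G'` : `G'` is the result of pruning the leaf `v₀` from `G`:
delete `v₀` (i.e. its unique edge); if as a result the neighbor `u` of `v₀`
becomes a degree-two node, additionally delete `u` and connect its former two
other neighbors by an edge. Deleted vertices become unused isolated vertices. -/
def PruneSpec (G : SimpleGraph V) (v₀ : V) (G' : SimpleGraph V) : Prop :=
  ∃ u, G.neighborSet v₀ = {u} ∧
    ((deg G u ≠ 3 ∧ G' = G.deleteEdges {s(u, v₀)}) ∨
     (deg G u = 3 ∧ ∃ p q, p ≠ q ∧ p ≠ v₀ ∧ q ≠ v₀ ∧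
        G.neighborSet u = {v₀, p, q} ∧
        G' = G.deleteEdges {s(u, v₀), s(u, p), s(u, q)} ⊔ fromEdgeSet {s(p, q)}))

/-- A leaf is prunable if pruning it leaves the information content unchanged. -/
def Prunable (G : SimpleGraph V) (ψ : V → L) (v₀ : V) : Prop :=
  IsLeaf G v₀ ∧ ∃ G', PruneSpec G v₀ G' ∧ infoContent G' ψ = infoContent G ψ

/-- An internal edge is contractible if contracting it leaves the information
content unchanged. -/
def Contractible (G : SimpleGraph V) (ψ : V → L) (a b : V) : Prop :=
  InternalEdge G a b ∧ infoContent (contractEdge G a b) ψ = infoContent G ψ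

/-- Maximally reduced: no prunable leaf and no contractible internal edge. -/
def MaximallyReduced (G : SimpleGraph V) (ψ : V → L) : Prop :=
  (∀ v, ¬ Prunable G ψ v) ∧ (∀ a b, ¬ Contractible G ψ a b)

/-- One reduction step: prune a prunable leaf or contract a contractible
internal edge. -/
def ReduceStep (ψ : V → L) (G G' : SimpleGraph V) : Prop :=
  (∃ v₀, Prunable G ψ v₀ ∧ PruneSpec G v₀ G') ∨
  (∃ a b, Contractible G ψ a b ∧ G' = contractEdge G a b)

/-- `H` is a maximally reduced form (MRF) of `G`: obtained from `G` by repeatedly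
pruning prunable leaves and contracting contractible internal edges, until
neither operation is possible. -/
def IsMRF (ψ : V → L) (G H : SimpleGraph V) : Prop :=
  Relation.ReflTransGen (ReduceStep ψ) G H ∧ MaximallyReduced H ψ

/-- Label-preserving isomorphism of (leaf-labeled) trees: a graph isomorphism
between the supports mapping leaves to leaves and preserving leaf labels. -/
def LIso (G : SimpleGraph V) (ψ : V → L) (G' : SimpleGraph V') (ψ' : V' → L) : Prop :=
  ∃ f : G.support ≃ G'.support,
    (∀ x y : G.support, G'.Adj (f x).1 (f y).1 ↔ G.Adj x.1 y.1) ∧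
    (∀ x : G.support, IsLeaf G x.1 → IsLeaf G' (f x).1 ∧ ψ' (f x).1 = ψ x.1)

/-- The set of internal edges of `G`, as unordered pairs. -/
def internalEdgeSet (G : SimpleGraph V) : Set (Sym2 V) :=
  {e | ∃ a b, e = s(a, b) ∧ InternalEdge G a b}

/-- The subtree `T_z^{yz}` branches out from the path `P_{u,x}` :
`y` is an interior vertex of the path and `z` is off the path. -/
def BranchesOut (G : SimpleGraph V) (u x y z : V) : Prop :=
  G.Adj y z ∧ OnPath G y u x ∧ y ≠ u ∧ y ≠ x ∧ ¬ OnPath G z u x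

/-- Vertices of the minimal subtree spanning all leaves labeled `ℓ`. -/
def spanVerts (G : SimpleGraph V) (ψ : V → L) (ℓ : L) : Set V :=
  {p | ∃ c d, IsLeaf G c ∧ IsLeaf G d ∧ ψ c = ℓ ∧ ψ d = ℓ ∧ OnPath G p c d}

/-- Degree of `y` within the subtree induced on the vertex set `S`. -/
noncomputable def degIn (G : SimpleGraph V) (S : Set V) (y : V) : ℕ :=
  (G.neighborSet y ∩ S).ncard

/-- One step of deleting a leaf labeled `ℓ` (by pruning, with suppression). -/
def PruneLabelStep (ψ : V → L) (ℓ : L) (G G' : SimpleGraph V) : Prop :=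
  ∃ v₀, IsLeaf G v₀ ∧ ψ v₀ = ℓ ∧ PruneSpec G v₀ G'


section Aux0
variable {V L : Type} {G : SimpleGraph V}

lemma side_swap (G : SimpleGraph V) (u v : V) :
    side G v u = {w | (G.deleteEdges {s(u, v)}).Reachable w v} := by
  unfold side; rw [Sym2.eq_swap]

lemma side_closed {u v a b : V} (hadj : G.Adj a b)
    (ha : a ∈ side G u v ∨ a ∈ side G v u) : b ∈ side G u v ∨ b ∈ side G v u := by
  rw [side_swap G u v] at ha ⊢
  by_cases he : s(a, b) = s(u, v)
  · rw [Sym2.eq_iff] at he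
    rcases he with ⟨rfl, rfl⟩ | ⟨rfl, rfl⟩
    · exact Or.inr (Reachable.refl _)
    · exact Or.inl (Reachable.refl _)
  · have hadj' : (G.deleteEdges {s(u, v)}).Adj b a := by
      rw [SimpleGraph.deleteEdges_adj]
      exact ⟨hadj.symm, by simpa [Sym2.eq_swap] using he⟩
    rcases ha with h1 | h1
    · exact Or.inl (hadj'.reachable.trans h1)
    · exact Or.inr (hadj'.reachable.trans h1)

lemma side_cases {u v w : V} (h : G.Reachable w u) :
    w ∈ side G u v ∨ w ∈ side G v u := by
  obtain ⟨p⟩ := h.symm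
  have : ∀ {x y : V} (_ : G.Walk x y),
      x ∈ side G u v ∨ x ∈ side G v u → y ∈ side G u v ∨ y ∈ side G v u := by
    intro x y p
    induction p with
    | nil => exact id
    | cons h' q ih => exact fun hx => ih (side_closed h' hx)
  exact this p (Or.inl (Reachable.refl _))

lemma side_disjoint (hac : G.IsAcyclic) {u v w : V}
    (h : G.Adj u v) (h1 : w ∈ side G u v) (h2 : w ∈ side G v u) : False := by
  rw [side_swap] at h2
  have hb := (SimpleGraph.isAcyclic_iff_forall_adj_isBridge.mp hac) h
  rw [SimpleGraph.isBridge_iff] at hb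
  exact hb (h1.symm.trans h2)

lemma leaf_mem_support {w : V} (h : IsLeaf G w) : w ∈ G.support := by
  have hne : (G.neighborSet w).Nonempty :=
    Set.nonempty_of_ncard_ne_zero (by rw [show (G.neighborSet w).ncard = 1 from h]; omega)
  obtain ⟨y, hy⟩ := hne
  exact ⟨y, hy⟩

/-- Key lemma: if `m ∈ M_u^{uv}` then ANY leaf labeled `m` lies on the `u`-side,
and under the injective labeling `Sum.inl`, its own label is in the new `M_u^{uv}`. -/
lemma key_lemma {ψ : V → L} (hac : G.IsAcyclic)
    (hconn : ∀ a ∈ G.support, ∀ b ∈ G.support, G.Reachable a b)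
    {u v : V} (hadj : G.Adj u v) {m : L} (hm : m ∈ Mside G ψ u v)
    {w : V} (hw : IsLeaf G w) (hψ : ψ w = m) :
    Sum.inl w ∈ Mside G (Sum.inl : V → V ⊕ L) u v := by
  have hu : u ∈ G.support := ⟨v, hadj⟩
  have hr : G.Reachable w u := hconn w (leaf_mem_support hw) u hu
  have hside : w ∈ side G u v := by
    rcases side_cases (v := v) hr with h | h
    · exact h
    · exact absurd ⟨w, hw, h, hψ⟩ hm.2
  refine ⟨⟨w, hw, hside, rfl⟩, ?_⟩
  rintro ⟨w', hw', hside', he⟩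
  cases Sum.inl.inj he
  exact side_disjoint hac hadj hside hside'

end Aux0

/-- For every MUL-tree `(T, M, ψ)` there exists a singly-labeled tree
`(T', M', ψ')` whose label set `M'` contains `M` and such that every quartet in
`I(T)` also belongs to `I(T')`; in particular `I(T)` is compatible. -/
theorem stmt0 (T : MulTree V L) :
    ∃ (V' L' : Type) (T' : MulTree V' L') (f : L ↪ L'),
      SinglyLabeled T'.G T'.ψ ∧
      (∀ m ∈ labelSet T.G T.ψ, f m ∈ labelSet T'.G T'.ψ) ∧
      Sym2.map (Sym2.map ⇑f) '' infoContent T.G T.ψ ⊆ infoContent T'.G T'.ψ := by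
  
  classical
  have hL : ∀ m ∈ labelSet T.G T.ψ, ∃ w, IsLeaf T.G w ∧ T.ψ w = m := fun m hm => hm
  set F : L → V ⊕ L := fun m =>
    if h : m ∈ labelSet T.G T.ψ then Sum.inl (hL m h).choose else Sum.inr m with hF
  have hFspec : ∀ {m} (h : m ∈ labelSet T.G T.ψ),
      IsLeaf T.G (hL m h).choose ∧ T.ψ (hL m h).choose = m := fun {m} h => (hL m h).choose_spec
  have hFinj : Function.Injective F := by
    intro m₁ m₂ h
    simp only [hF] at h
    by_cases h1 : m₁ ∈ labelSet T.G T.ψ <;> by_cases h2 : m₂ ∈ labelSet T.G T.ψ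
    · rw [dif_pos h1, dif_pos h2] at h
      have e := Sum.inl.inj h
      rw [← (hFspec h1).2, ← (hFspec h2).2, e]
    · rw [dif_pos h1, dif_neg h2] at h; exact absurd h (by simp)
    · rw [dif_neg h1, dif_pos h2] at h; exact absurd h (by simp)
    · rw [dif_neg h1, dif_neg h2] at h; exact Sum.inr.inj h
  refine ⟨V, V ⊕ L, ⟨T.G, Sum.inl, T.fin, T.acyclic, T.conn, T.internal3⟩, ⟨F, hFinj⟩, ?_, ?_, ?_⟩
  · intro a b _ _ h
    exact Sum.inl.inj h
  · intro m hm
    have : F m = Sum.inl (hL m hm).choose := dif_pos hm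
    exact ⟨(hL m hm).choose, (hFspec hm).1, this.symm⟩
  · rintro q ⟨q0, hq0, rfl⟩
    obtain ⟨u, v, hadj, a, b, c, d, hab, hcd, ha, hb, hc, hd, rfl⟩ := hq0
    have hMsideLab : ∀ {x y : V} {m : L}, m ∈ Mside T.G T.ψ x y → m ∈ labelSet T.G T.ψ := by
      rintro x y m ⟨⟨w, hw, _, hψ⟩, -⟩
      exact ⟨w, hw, hψ⟩
    have hla := hMsideLab ha
    have hlb := hMsideLab hb
    have hlc := hMsideLab hc
    have hld := hMsideLab hd
    have hFa : F a = Sum.inl (hL a hla).choose := dif_pos hla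
    have hFb : F b = Sum.inl (hL b hlb).choose := dif_pos hlb
    have hFc : F c = Sum.inl (hL c hlc).choose := dif_pos hlc
    have hFd : F d = Sum.inl (hL d hld).choose := dif_pos hld
    have hvu : T.G.Adj v u := hadj.symm
    refine ⟨u, v, hadj, F a, F b, F c, F d, ?_, ?_, ?_, ?_, ?_, ?_, ?_⟩
    · intro h; apply hab; exact hFinj h
    · intro h; apply hcd; exact hFinj h
    · rw [hFa]; exact key_lemma T.acyclic T.conn hadj ha (hFspec hla).1 (hFspec hla).2
    · rw [hFb]; exact key_lemma T.acyclic T.conn hadj hb (hFspec hlb).1 (hFspec hlb).2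
    · rw [hFc]; exact key_lemma T.acyclic T.conn hvu hc (hFspec hlc).1 (hFspec hlc).2
    · rw [hFd]; exact key_lemma T.acyclic T.conn hvu hd (hFspec hld).1 (hFspec hld).2
    · simp only [Sym2.map_pair_eq, Function.Embedding.coeFn_mk]
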